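/- Let (A,B,C) be a triple of d×d complex matrices with equal diagonals which is triplewise completely positive (TCP). Then ‖A‖₁ − ‖A‖_Tr ≥ 2·Σ_{1 ≤ i < j ≤ d} max(|B_ij|, |C_ij|), where ‖A‖₁ = Σ_{i,j} |A_ij| is the entrywise ℓ¹ norm and ‖A‖_Tr = Tr √(A^* A) is the trace (nuclear) norm. -/

import Mathlib

open Matrix
open scoped ComplexOrder

/-- Triplewise complete positivity of a triple `(A,B,C)`. -/
def TCP {d : ℕ} (A B C : Matrix (Fin d) (Fin d) ℂ) : Prop :=
  ∃ (d' : ℕ) (V W : Matrix (Fin d) (Fin d') ℂ),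
    A = (V ⊙ V.map star) * (W ⊙ W.map star)ᴴ ∧
    B = (V ⊙ W) * (V ⊙ W)ᴴ ∧
    C = (V ⊙ W.map star) * (V ⊙ W.map star)ᴴ

/-- The entrywise ℓ¹ norm of a matrix. -/
noncomputable def entrywiseL1Norm {d : ℕ} (A : Matrix (Fin d) (Fin d) ℂ) : ℝ :=
  ∑ i, ∑ j, ‖A i j‖

/-- The trace (nuclear) norm of a matrix: the trace of the positive semidefinite
square root of `Aᴴ * A`. -/
noncomputable def traceNorm {d : ℕ} (A : Matrix (Fin d) (Fin d) ℂ) : ℝ :=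
  (((Matrix.isHermitian_conjTranspose_mul_self A).eigenvectorUnitary.1 *
    diagonal (((↑) : ℝ → ℂ) ∘ Real.sqrt ∘ (Matrix.isHermitian_conjTranspose_mul_self A).eigenvalues) *
    (star (Matrix.isHermitian_conjTranspose_mul_self A).eigenvectorUnitary : Matrix (Fin d) (Fin d) ℂ)).trace).re


lemma double_ite_lt {n : ℕ} (F : Fin n → Fin n → ℝ) (hsym : ∀ i j, F i j = F j i) :
    2 * (∑ i, ∑ j, if i < j then F i j else 0) = ∑ i, ∑ j, F i j - ∑ i, F i i := by
  have hswap : (∑ i, ∑ j, if j < i then F i j else 0)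
      = ∑ i, ∑ j, if i < j then F i j else 0 := by
    rw [Finset.sum_comm]
    refine Finset.sum_congr rfl fun i _ => Finset.sum_congr rfl fun j _ => ?_
    rw [hsym]
  have hkey : ∀ i j : Fin n, (if i < j then F i j else 0) + (if j < i then F i j else 0)
      = F i j - (if i = j then F i j else 0) := by
    intro i j
    rcases lt_trichotomy i j with h | h | h
    · rw [if_pos h, if_neg (asymm h), if_neg h.ne]; ring
    · subst h; simp
    · rw [if_neg (asymm h), if_pos h, if_neg h.ne']; ring
  have hdiag : (∑ i, ∑ j, if i = j then F i j else 0) = ∑ i, F i i := by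
    refine Finset.sum_congr rfl fun i _ => ?_
    rw [Finset.sum_ite_eq Finset.univ i (fun j => F i j), if_pos (Finset.mem_univ i)]
  calc 2 * (∑ i, ∑ j, if i < j then F i j else 0)
      = (∑ i, ∑ j, if i < j then F i j else 0) + (∑ i, ∑ j, if j < i then F i j else 0) := by
        rw [hswap]; ring
    _ = ∑ i, ∑ j, ((if i < j then F i j else 0) + (if j < i then F i j else 0)) := by
        rw [← Finset.sum_add_distrib]
        exact Finset.sum_congr rfl fun i _ => (Finset.sum_add_distrib).symm
    _ = ∑ i, ∑ j, (F i j - if i = j then F i j else 0) :=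
        Finset.sum_congr rfl fun i _ => Finset.sum_congr rfl fun j _ => hkey i j
    _ = ∑ i, ∑ j, F i j - ∑ i, F i i := by
        rw [← hdiag, ← Finset.sum_sub_distrib]
        exact Finset.sum_congr rfl fun i _ => Finset.sum_sub_distrib _ _

lemma lagrange_identity {n : ℕ} (a b : Fin n → ℝ) :
    (∑ i, a i ^ 2) * (∑ i, b i ^ 2) - (∑ i, a i * b i)^2
      = ∑ i, ∑ j, if i < j then (a i * b j - a j * b i)^2 else 0 := by
  have h2 := double_ite_lt (fun i j => (a i * b j - a j * b i)^2) (fun i j => by ring)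
  have hexp : (∑ i, ∑ j, (a i * b j - a j * b i)^2)
      = 2 * ((∑ i, a i ^ 2) * (∑ i, b i ^ 2) - (∑ i, a i * b i)^2) := by
    have hrow : ∀ i : Fin n, (∑ j, (a i * b j - a j * b i)^2)
        = a i^2 * (∑ j, b j^2) + b i^2 * (∑ j, a j^2)
          - (a i * b i) * (∑ j, 2 * (a j * b j)) := by
      intro i
      rw [Finset.mul_sum, Finset.mul_sum, Finset.mul_sum, ← Finset.sum_add_distrib,
        ← Finset.sum_sub_distrib]
      exact Finset.sum_congr rfl fun j _ => by ring
    rw [Finset.sum_congr rfl fun i _ => hrow i]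
    rw [Finset.sum_sub_distrib, Finset.sum_add_distrib, ← Finset.sum_mul, ← Finset.sum_mul,
      ← Finset.sum_mul, ← Finset.mul_sum]
    ring
  have hdiagzero : (∑ i : Fin n, (a i * b i - a i * b i)^2) = 0 := by simp
  rw [hexp] at h2
  rw [hdiagzero] at h2
  linarith

set_option maxHeartbeats 1000000 in
lemma key_ineq {n : ℕ} (x y : Fin n → ℝ) (hx : ∀ i, 0 ≤ x i) (hy : ∀ i, 0 ≤ y i) :
    (∑ i, Real.sqrt (x i * y i))^2 - ∑ i, x i * y i
      ≤ (∑ i, x i) * (∑ i, y i) - Real.sqrt (∑ i, x i^2) * Real.sqrt (∑ i, y i^2) := by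
  set a : Fin n → ℝ := fun i => Real.sqrt (x i) with ha
  set b : Fin n → ℝ := fun i => Real.sqrt (y i) with hb
  have hax : ∀ i, a i^2 = x i := fun i => Real.sq_sqrt (hx i)
  have hby : ∀ i, b i^2 = y i := fun i => Real.sq_sqrt (hy i)
  have hab : ∀ i, Real.sqrt (x i * y i) = a i * b i := fun i => Real.sqrt_mul (hx i) _
  have habsq : ∀ i, (a i * b i)^2 = x i * y i := by
    intro i; rw [mul_pow, hax, hby]
  set S := ∑ i, x i * y i with hS
  have hS0 : 0 ≤ S := Finset.sum_nonneg fun i _ => mul_nonneg (hx i) (hy i)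
  set L := ∑ i, ∑ j, if i < j then (a i * b j - a j * b i)^2 else 0 with hL
  have hL0 : 0 ≤ L := Finset.sum_nonneg fun i _ => Finset.sum_nonneg fun j _ => by positivity
  -- first Lagrange: (∑x)(∑y) = (∑ab)² + L
  have h1 : (∑ i, x i) * (∑ i, y i) - (∑ i, a i * b i)^2 = L := by
    have := lagrange_identity a b
    simp_rw [hax, hby] at this
    exact this
  -- second Lagrange: (∑x²)(∑y²) = S² + T
  have h2 : (∑ i, x i^2) * (∑ i, y i^2) - S^2
      = ∑ i, ∑ j, if i < j then (x i * y j - x j * y i)^2 else 0 := by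
    have := lagrange_identity x y
    rw [hS]
    exact this
  set T := ∑ i, ∑ j, if i < j then (x i * y j - x j * y i)^2 else 0 with hT
  -- termwise: each u_{ij}² ≤ L
  have husqL : ∀ i j : Fin n, i < j → (a i * b j - a j * b i)^2 ≤ L := by
    intro i j hij
    rw [hL]
    have hrow : (if i < j then (a i * b j - a j * b i)^2 else 0)
        ≤ ∑ j', if i < j' then (a i * b j' - a j' * b i)^2 else 0 :=
      Finset.single_le_sum (f := fun j' => if i < j' then (a i * b j' - a j' * b i)^2 else 0)
        (fun j' _ => by by_cases h : i < j' <;> simp [h, sq_nonneg]) (Finset.mem_univ j)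
    rw [if_pos hij] at hrow
    refine hrow.trans ?_
    exact Finset.single_le_sum
      (f := fun i' => ∑ j', if i' < j' then (a i' * b j' - a j' * b i')^2 else 0)
      (fun i' _ => Finset.sum_nonneg fun j' _ => by by_cases h : i' < j' <;> simp [h, sq_nonneg])
      (Finset.mem_univ i)
  -- termwise bound for T
  have hTterm : ∀ i j : Fin n, i < j → (x i * y j - x j * y i)^2
      ≤ L * (a i * b j - a j * b i)^2 + 2 * S * (a i * b j - a j * b i)^2 := by
    intro i j hij
    have hxy : x i * y j - x j * y i
        = (a i * b j - a j * b i) * (a i * b j + a j * b i) := by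
      rw [show x i * y j = (a i * b j)^2 by rw [← hax i, ← hby j]; ring,
        show x j * y i = (a j * b i)^2 by rw [← hax j, ← hby i]; ring]
      ring
    have hamgm : 4 * ((a i * b i) * (a j * b j)) ≤ 2 * S := by
      have hpair : x i * y i + x j * y j ≤ S := by
        rw [hS]
        have := Finset.sum_le_sum_of_subset_of_nonneg
          (Finset.subset_univ {i, j}) (fun m _ _ => mul_nonneg (hx m) (hy m))
        rwa [Finset.sum_pair hij.ne] at this
      nlinarith [sq_nonneg (a i * b i - a j * b j), habsq i, habsq j]
    have hv : (a i * b j + a j * b i)^2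
        = (a i * b j - a j * b i)^2 + 4 * ((a i * b i) * (a j * b j)) := by ring
    have hu2L := husqL i j hij
    have hu2 : 0 ≤ (a i * b j - a j * b i)^2 := sq_nonneg _
    calc (x i * y j - x j * y i)^2
        = (a i * b j - a j * b i)^2 * (a i * b j + a j * b i)^2 := by rw [hxy]; ring
      _ = (a i * b j - a j * b i)^2 * ((a i * b j - a j * b i)^2
            + 4 * ((a i * b i) * (a j * b j))) := by rw [hv]
      _ ≤ (a i * b j - a j * b i)^2 * (L + 2 * S) := by nlinarith
      _ = L * (a i * b j - a j * b i)^2 + 2 * S * (a i * b j - a j * b i)^2 := by ring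
  -- sum the termwise bound
  have hTle : T ≤ L^2 + 2 * S * L := by
    have : T ≤ ∑ i, ∑ j, if i < j then
        L * (a i * b j - a j * b i)^2 + 2 * S * (a i * b j - a j * b i)^2 else 0 := by
      refine Finset.sum_le_sum fun i _ => Finset.sum_le_sum fun j _ => ?_
      by_cases hij : i < j
      · rw [if_pos hij, if_pos hij]; exact hTterm i j hij
      · rw [if_neg hij, if_neg hij]
    refine this.trans ?_
    have hsplit : (∑ i, ∑ j, if i < j then
        L * (a i * b j - a j * b i)^2 + 2 * S * (a i * b j - a j * b i)^2 else 0)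
        = L * L + 2 * S * L := by
      have : ∀ i j : Fin n, (if i < j then
          L * (a i * b j - a j * b i)^2 + 2 * S * (a i * b j - a j * b i)^2 else 0)
          = (L + 2*S) * (if i < j then (a i * b j - a j * b i)^2 else 0) := by
        intro i j; split <;> ring
      simp_rw [this, ← Finset.mul_sum]
      rw [← hL]; ring
    rw [hsplit]; nlinarith
  -- conclude
  have hsqle : Real.sqrt (∑ i, x i^2) * Real.sqrt (∑ i, y i^2) ≤ S + L := by
    rw [← Real.sqrt_mul (Finset.sum_nonneg fun i _ => sq_nonneg _)]
    have hb2 : (∑ i, x i^2) * (∑ i, y i^2) ≤ (S + L)^2 := by nlinarith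
    have := Real.sqrt_le_sqrt hb2
    rwa [Real.sqrt_sq (by positivity)] at this
  have hfin : (∑ i, Real.sqrt (x i * y i))^2 = (∑ i, a i * b i)^2 := by
    rw [Finset.sum_congr rfl fun i _ => hab i]
  rw [hfin]
  linarith

lemma traceNorm_eq_sum_sqrt {d : ℕ} (A : Matrix (Fin d) (Fin d) ℂ) :
    traceNorm A = ∑ i, Real.sqrt ((Matrix.posSemidef_conjTranspose_mul_self A).1.eigenvalues i) := by
  rw [traceNorm, Matrix.trace_mul_cycle,
    Unitary.coe_star_mul_self, one_mul, Matrix.trace_diagonal, Complex.re_sum]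
  exact Finset.sum_congr rfl fun i _ => by simp

lemma traceNorm_factor_le {d d' : ℕ} (P Q : Matrix (Fin d) (Fin d') ℂ) :
    traceNorm (P * Qᴴ) ≤ ∑ k, Real.sqrt (∑ i, Complex.normSq (P i k)) *
      Real.sqrt (∑ i, Complex.normSq (Q i k)) := by
  classical
  set A : Matrix (Fin d) (Fin d) ℂ := P * Qᴴ with hA
  set hM := Matrix.posSemidef_conjTranspose_mul_self A with hMdef
  set lam : Fin d → ℝ := hM.1.eigenvalues with hlam
  have hlam0 : ∀ i, 0 ≤ lam i := fun i => hM.eigenvalues_nonneg i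
  set v : Fin d → EuclideanSpace ℂ (Fin d) := fun i => hM.1.eigenvectorBasis i with hv
  have horth : Orthonormal ℂ v := hM.1.eigenvectorBasis.orthonormal
  set w : Fin d → EuclideanSpace ℂ (Fin d) := fun i => WithLp.toLp 2 (A *ᵥ v i) with hw
  have hmv : ∀ j, (Aᴴ * A) *ᵥ (v j : Fin d → ℂ) = lam j • (v j : Fin d → ℂ) :=
    fun j => hM.1.mulVec_eigenvectorBasis j
  -- inner products of w i
  have hinner : ∀ i j, (inner ℂ (w i) (w j) : ℂ) = if i = j then (lam j : ℂ) else 0 := by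
    intro i j
    have h1 : (inner ℂ (w i) (w j) : ℂ)
        = star ((v i : Fin d → ℂ)) ⬝ᵥ ((Aᴴ * A) *ᵥ (v j : Fin d → ℂ)) := by
      rw [EuclideanSpace.inner_eq_star_dotProduct, dotProduct_comm]
      show star (A *ᵥ (v i : Fin d → ℂ)) ⬝ᵥ (A *ᵥ (v j : Fin d → ℂ)) = _
      rw [star_mulVec, ← dotProduct_mulVec, mulVec_mulVec]
    have h2 : (lam j) • (v j : Fin d → ℂ) = (lam j : ℂ) • (v j : Fin d → ℂ) := by
      funext r; simp [Complex.real_smul]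
    have h3 : star ((v i : Fin d → ℂ)) ⬝ᵥ (v j : Fin d → ℂ) = if i = j then 1 else 0 :=
      by rw [← orthonormal_iff_ite.mp horth i j, EuclideanSpace.inner_eq_star_dotProduct, dotProduct_comm]
    rw [h1, hmv j, h2, dotProduct_smul, h3]
    split <;> simp [smul_eq_mul]
  have hAv0 : ∀ i, lam i = 0 → w i = 0 := by
    intro i h0
    have hz : (inner ℂ (w i) (w i) : ℂ) = 0 := by rw [hinner i i, if_pos rfl, h0]; simp
    exact inner_self_eq_zero.mp hz
  set u : Fin d → EuclideanSpace ℂ (Fin d) :=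
    fun i => ((((Real.sqrt (lam i))⁻¹ : ℝ)) : ℂ) • w i with hu
  have hu_inner : ∀ i j, (inner ℂ (u i) (u j) : ℂ)
      = if i = j ∧ lam i ≠ 0 then 1 else 0 := by
    intro i j
    rw [hu]
    rw [inner_smul_left, inner_smul_right, hinner i j, Complex.conj_ofReal]
    rcases eq_or_ne i j with rfl | hne
    · rcases eq_or_ne (lam i) 0 with h0 | h0
      · simp [h0]
      · have hlt : 0 < lam i := lt_of_le_of_ne (hlam0 i) (Ne.symm h0)
        have hs : Real.sqrt (lam i) ≠ 0 := (Real.sqrt_pos.mpr hlt).ne'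
        have hss := Real.mul_self_sqrt (hlam0 i)
        rw [if_pos rfl, if_pos (show i = i ∧ lam i ≠ 0 from ⟨rfl, h0⟩)]
        norm_cast
        field_simp
        rw [sq, hss]
    · simp [hne]
  have hsqrt_eq : ∀ i, Real.sqrt (lam i) = (inner ℂ (u i) (w i) : ℂ).re := by
    intro i
    rw [hu]
    rw [inner_smul_left, hinner i i, if_pos rfl, Complex.conj_ofReal]
    rw [← Complex.ofReal_mul, Complex.ofReal_re]
    rcases eq_or_ne (lam i) 0 with h0 | h0
    · simp [h0]
    · have hlt : 0 < lam i := lt_of_le_of_ne (hlam0 i) (Ne.symm h0)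
      have hs : Real.sqrt (lam i) ≠ 0 := (Real.sqrt_pos.mpr hlt).ne'
      have hss := Real.mul_self_sqrt (hlam0 i)
      field_simp
      rw [sq, hss]
  have hu0 : ∀ i, lam i = 0 → u i = 0 := by
    intro i h0; rw [hu]; simp [hAv0 i h0]
  -- columns of P and Q
  set pc : Fin d' → EuclideanSpace ℂ (Fin d) := fun k => WithLp.toLp 2 (fun i => P i k) with hpc
  set qc : Fin d' → EuclideanSpace ℂ (Fin d) := fun k => WithLp.toLp 2 (fun i => Q i k) with hqc
  have hfac : ∀ i, (inner ℂ (u i) (w i) : ℂ)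
      = ∑ k, (inner ℂ (u i) (pc k) : ℂ) * (inner ℂ (qc k) (v i) : ℂ) := by
    intro i
    rw [EuclideanSpace.inner_eq_star_dotProduct (u i) (w i), dotProduct_comm (w i).ofLp]
    show star ((u i : Fin d → ℂ)) ⬝ᵥ ((P * Qᴴ) *ᵥ (v i : Fin d → ℂ)) = _
    rw [← mulVec_mulVec, dotProduct_mulVec]
    refine Finset.sum_congr rfl fun k _ => ?_
    congr 1
    all_goals exact ((EuclideanSpace.inner_eq_star_dotProduct _ _).trans (dotProduct_comm _ _)).symm
  have hbesselu : ∀ z : EuclideanSpace ℂ (Fin d), (∑ i, ‖(inner ℂ (u i) z : ℂ)‖^2) ≤ ‖z‖^2 := by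
    intro z
    haveI : DecidablePred (fun i : Fin d => lam i ≠ 0) := Classical.decPred _
    set s : Finset (Fin d) := Finset.univ.filter (fun i => lam i ≠ 0) with hs
    have horthu : Orthonormal ℂ (fun i : s => u i.1) := by
      rw [orthonormal_iff_ite]
      intro i j
      have hi : lam i.1 ≠ 0 := (Finset.mem_filter.mp i.2).2
      rw [hu_inner i.1 j.1]
      by_cases hij : i = j
      · subst hij; simp [hi]
      · have hne : i.1 ≠ j.1 := fun hc => hij (Subtype.ext hc)
        simp [hne, hij]
    have h1 : (∑ i ∈ s, ‖(inner ℂ (u i) z : ℂ)‖^2) = ∑ i, ‖(inner ℂ (u i) z : ℂ)‖^2 := by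
      rw [hs]
      exact Finset.sum_filter_of_ne fun i _ hne h0 => hne (by rw [hu0 i h0]; simp)
    rw [← h1, ← Finset.sum_coe_sort s (fun i => ‖(inner ℂ (u i) z : ℂ)‖^2)]
    exact horthu.sum_inner_products_le z
  have hbesselv : ∀ z : EuclideanSpace ℂ (Fin d), (∑ i, ‖(inner ℂ z (v i) : ℂ)‖^2) ≤ ‖z‖^2 := by
    intro z
    have : ∀ i, ‖(inner ℂ z (v i) : ℂ)‖ = ‖(inner ℂ (v i) z : ℂ)‖ := fun i => norm_inner_symm z (v i)
    simp_rw [this]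
    exact horth.sum_inner_products_le z
  have hnorm : ∀ x : EuclideanSpace ℂ (Fin d), ‖x‖ = Real.sqrt (∑ i, Complex.normSq (x i)) := by
    intro x
    rw [EuclideanSpace.norm_eq]
    congr 1; exact Finset.sum_congr rfl fun i _ => by rw [← Complex.sq_norm]
  rw [traceNorm_eq_sum_sqrt]
  show (∑ i, Real.sqrt (lam i)) ≤ _
  calc ∑ i, Real.sqrt (lam i) = ∑ i, (inner ℂ (u i) (w i) : ℂ).re :=
        Finset.sum_congr rfl fun i _ => hsqrt_eq i
    _ = ∑ i, ∑ k, ((inner ℂ (u i) (pc k) : ℂ) * (inner ℂ (qc k) (v i) : ℂ)).re := by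
        refine Finset.sum_congr rfl fun i _ => ?_
        rw [hfac i, Complex.re_sum]
    _ = ∑ k, ∑ i, ((inner ℂ (u i) (pc k) : ℂ) * (inner ℂ (qc k) (v i) : ℂ)).re := Finset.sum_comm
    _ ≤ ∑ k, ∑ i, ‖(inner ℂ (u i) (pc k) : ℂ)‖ * ‖(inner ℂ (qc k) (v i) : ℂ)‖ := by
        refine Finset.sum_le_sum fun k _ => Finset.sum_le_sum fun i _ => ?_
        refine (Complex.re_le_norm _).trans ?_
        rw [norm_mul]
    _ ≤ ∑ k, ‖pc k‖ * ‖qc k‖ := by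
        refine Finset.sum_le_sum fun k _ => ?_
        refine (Real.sum_mul_le_sqrt_mul_sqrt Finset.univ _ _).trans ?_
        have h1 : Real.sqrt (∑ i, ‖(inner ℂ (u i) (pc k) : ℂ)‖^2) ≤ ‖pc k‖ := by
          rw [show ‖pc k‖ = Real.sqrt (‖pc k‖^2) from (Real.sqrt_sq (norm_nonneg _)).symm]
          exact Real.sqrt_le_sqrt (hbesselu (pc k))
        have h2 : Real.sqrt (∑ i, ‖(inner ℂ (qc k) (v i) : ℂ)‖^2) ≤ ‖qc k‖ := by
          rw [show ‖qc k‖ = Real.sqrt (‖qc k‖^2) from (Real.sqrt_sq (norm_nonneg _)).symm]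
          exact Real.sqrt_le_sqrt (hbesselv (qc k))
        exact mul_le_mul h1 h2 (Real.sqrt_nonneg _) (norm_nonneg _)
    _ = ∑ k, Real.sqrt (∑ i, Complex.normSq (P i k)) * Real.sqrt (∑ i, Complex.normSq (Q i k)) := by
        refine Finset.sum_congr rfl fun k _ => ?_
        rw [hnorm (pc k), hnorm (qc k)]

theorem stmt7 {d : ℕ} (A B C : Matrix (Fin d) (Fin d) ℂ)
    (hdiag : ∀ i, A i i = B i i ∧ A i i = C i i)
    (h : TCP A B C) :
    2 * ∑ i : Fin d, ∑ j : Fin d,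
        (if i < j then max (‖B i j‖) (‖C i j‖) else 0)
      ≤ entrywiseL1Norm A - traceNorm A := by
  obtain ⟨d', V, W, hAeq, hBeq, hCeq⟩ := h
  set x : Fin d → Fin d' → ℝ := fun i k => Complex.normSq (V i k) with hx
  set y : Fin d → Fin d' → ℝ := fun i k => Complex.normSq (W i k) with hy
  set s : Fin d → Fin d' → ℝ := fun i k => ‖V i k‖ * ‖W i k‖ with hs
  have hx0 : ∀ i k, 0 ≤ x i k := fun i k => Complex.normSq_nonneg _
  have hy0 : ∀ i k, 0 ≤ y i k := fun i k => Complex.normSq_nonneg _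
  have hs0 : ∀ i k, 0 ≤ s i k := fun i k => mul_nonneg (norm_nonneg _) (norm_nonneg _)
  have hs2 : ∀ i k, s i k ^ 2 = x i k * y i k := by
    intro i k
    rw [hs, hx, hy]
    simp only [mul_pow, Complex.sq_norm]
  have hssqrt : ∀ i k, s i k = Real.sqrt (x i k * y i k) := by
    intro i k
    rw [← Real.sqrt_sq (hs0 i k), hs2]
  -- entries of A
  have hmulconj : ∀ z w : ℂ, (z * star z) * star (w * star w)
      = ((Complex.normSq z * Complex.normSq w : ℝ) : ℂ) := by
    intro z w
    rw [StarMul.star_mul, star_star, Complex.star_def,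
      Complex.mul_conj, Complex.mul_conj]
    push_cast
    ring
  have hAentry : ∀ i j, A i j = ((∑ k, x i k * y j k : ℝ) : ℂ) := by
    intro i j
    rw [hAeq]
    simp only [Matrix.mul_apply, Matrix.conjTranspose_apply, Matrix.hadamard_apply,
      Matrix.map_apply]
    rw [Complex.ofReal_sum]
    exact Finset.sum_congr rfl fun k _ => hmulconj (V i k) (W j k)
  have habs_star : ∀ z : ℂ, ‖star z‖ = ‖z‖ := fun z => by
    rw [Complex.star_def, Complex.norm_conj]
  have hsum_xy_nonneg : ∀ i j, 0 ≤ ∑ k, x i k * y j k :=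
    fun i j => Finset.sum_nonneg fun k _ => mul_nonneg (hx0 i k) (hy0 j k)
  have habsA : ∀ i j, ‖A i j‖ = ∑ k, x i k * y j k := by
    intro i j
    rw [hAentry i j, Complex.norm_real, Real.norm_eq_abs, abs_of_nonneg (hsum_xy_nonneg i j)]
  have hl1 : entrywiseL1Norm A = ∑ k, (∑ i, x i k) * (∑ i, y i k) := by
    rw [entrywiseL1Norm]
    calc ∑ i, ∑ j, ‖A i j‖
        = ∑ i, ∑ j, ∑ k, x i k * y j k :=
          Finset.sum_congr rfl fun i _ => Finset.sum_congr rfl fun j _ => habsA i j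
      _ = ∑ i, ∑ k, ∑ j, x i k * y j k := Finset.sum_congr rfl fun i _ => Finset.sum_comm
      _ = ∑ k, ∑ i, ∑ j, x i k * y j k := Finset.sum_comm
      _ = ∑ k, (∑ i, x i k) * (∑ i, y i k) := Finset.sum_congr rfl fun k _ => by
          rw [Finset.sum_mul_sum]
  have habs4 : ∀ (z1 z2 w1 w2 : ℂ), ‖z1 * z2 * star (w1 * w2)‖
      = ‖z1‖ * ‖z2‖ * (‖w1‖ * ‖w2‖) := by
    intro z1 z2 w1 w2
    rw [norm_mul, habs_star, norm_mul, norm_mul]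
  have hBabs : ∀ i j, ‖B i j‖ ≤ ∑ k, s i k * s j k := by
    intro i j
    rw [hBeq]
    simp only [Matrix.mul_apply, Matrix.conjTranspose_apply, Matrix.hadamard_apply]
    refine (norm_sum_le _ _).trans (Finset.sum_le_sum fun k _ => le_of_eq ?_)
    rw [habs4]
  have hCabs : ∀ i j, ‖C i j‖ ≤ ∑ k, s i k * s j k := by
    intro i j
    rw [hCeq]
    simp only [Matrix.mul_apply, Matrix.conjTranspose_apply, Matrix.hadamard_apply,
      Matrix.map_apply]
    refine (norm_sum_le _ _).trans (Finset.sum_le_sum fun k _ => le_of_eq ?_)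
    rw [habs4, habs_star, habs_star]
  have hG : ∀ i j, max (‖B i j‖) (‖C i j‖) ≤ ∑ k, s i k * s j k :=
    fun i j => max_le (hBabs i j) (hCabs i j)
  have hBdiag : ∀ i, ‖B i i‖ = ∑ k, x i k * y i k := by
    intro i
    have hBe : B i i = ((∑ k, x i k * y i k : ℝ) : ℂ) := by
      rw [hBeq]
      simp only [Matrix.mul_apply, Matrix.conjTranspose_apply, Matrix.hadamard_apply]
      rw [Complex.ofReal_sum]
      refine Finset.sum_congr rfl fun k _ => ?_
      rw [Complex.star_def, Complex.mul_conj, _root_.map_mul]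
    rw [hBe, Complex.norm_real, Real.norm_eq_abs, abs_of_nonneg (hsum_xy_nonneg i i)]
  have hCdiag : ∀ i, ‖C i i‖ = ∑ k, x i k * y i k := by
    intro i
    have hCe : C i i = ((∑ k, x i k * y i k : ℝ) : ℂ) := by
      rw [hCeq]
      simp only [Matrix.mul_apply, Matrix.conjTranspose_apply, Matrix.hadamard_apply,
        Matrix.map_apply]
      rw [Complex.ofReal_sum]
      refine Finset.sum_congr rfl fun k _ => ?_
      rw [Complex.star_def, Complex.mul_conj, _root_.map_mul, Complex.normSq_conj]
    rw [hCe, Complex.norm_real, Real.norm_eq_abs, abs_of_nonneg (hsum_xy_nonneg i i)]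
  have hGdiag : ∀ i, max (‖B i i‖) (‖C i i‖) = ∑ k, x i k * y i k := by
    intro i; rw [hBdiag, hCdiag, max_self]
  have hBsym : ∀ i j, ‖B i j‖ = ‖B j i‖ := by
    intro i j
    have hh : Bᴴ = B := by rw [hBeq]; exact Matrix.isHermitian_mul_conjTranspose_self _
    have := congrFun (congrFun hh i) j
    rw [Matrix.conjTranspose_apply] at this
    rw [← this, habs_star]
  have hCsym : ∀ i j, ‖C i j‖ = ‖C j i‖ := by
    intro i j
    have hh : Cᴴ = C := by rw [hCeq]; exact Matrix.isHermitian_mul_conjTranspose_self _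
    have := congrFun (congrFun hh i) j
    rw [Matrix.conjTranspose_apply] at this
    rw [← this, habs_star]
  have hGsym : ∀ i j, max (‖B i j‖) (‖C i j‖)
      = max (‖B j i‖) (‖C j i‖) := by
    intro i j; rw [hBsym, hCsym]
  have hGd : (∑ i, max (‖B i i‖) (‖C i i‖))
      = ∑ k, ∑ i, x i k * y i k := by
    rw [Finset.sum_congr rfl fun i _ => hGdiag i]
    exact Finset.sum_comm
  have hGsum : (∑ i, ∑ j, max (‖B i j‖) (‖C i j‖))
      ≤ ∑ k, (∑ i, s i k)^2 := by
    calc (∑ i, ∑ j, max (‖B i j‖) (‖C i j‖))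
        ≤ ∑ i, ∑ j, ∑ k, s i k * s j k :=
          Finset.sum_le_sum fun i _ => Finset.sum_le_sum fun j _ => hG i j
      _ = ∑ i, ∑ k, ∑ j, s i k * s j k := Finset.sum_congr rfl fun i _ => Finset.sum_comm
      _ = ∑ k, ∑ i, ∑ j, s i k * s j k := Finset.sum_comm
      _ = ∑ k, (∑ i, s i k)^2 := Finset.sum_congr rfl fun k _ => by
          rw [sq, Finset.sum_mul_sum]
  have hkey : ∀ k, (∑ i, s i k)^2 - (∑ i, x i k * y i k)
      ≤ (∑ i, x i k) * (∑ i, y i k)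
        - Real.sqrt (∑ i, (x i k)^2) * Real.sqrt (∑ i, (y i k)^2) := by
    intro k
    have h := key_ineq (fun i => x i k) (fun i => y i k) (fun i => hx0 i k) (fun i => hy0 i k)
    rw [show (∑ i, Real.sqrt (x i k * y i k)) = ∑ i, s i k from
      Finset.sum_congr rfl fun i _ => (hssqrt i k).symm] at h
    exact h
  have htr : traceNorm A ≤ ∑ k, Real.sqrt (∑ i, (x i k)^2) * Real.sqrt (∑ i, (y i k)^2) := by
    rw [hAeq]
    refine (traceNorm_factor_le _ _).trans_eq ?_
    refine Finset.sum_congr rfl fun k _ => ?_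
    have h1 : (∑ i, Complex.normSq ((V ⊙ V.map star) i k)) = ∑ i, (x i k)^2 :=
      Finset.sum_congr rfl fun i _ => by
        simp only [Matrix.hadamard_apply, Matrix.map_apply]
        rw [_root_.map_mul, Complex.star_def, Complex.normSq_conj, sq]
    have h2 : (∑ i, Complex.normSq ((W ⊙ W.map star) i k)) = ∑ i, (y i k)^2 :=
      Finset.sum_congr rfl fun i _ => by
        simp only [Matrix.hadamard_apply, Matrix.map_apply]
        rw [_root_.map_mul, Complex.star_def, Complex.normSq_conj, sq]
    rw [h1, h2]
  have h2S := double_ite_lt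
    (fun i j => max (‖B i j‖) (‖C i j‖)) hGsym
  beta_reduce at h2S
  rw [h2S]
  calc (∑ i, ∑ j, max (‖B i j‖) (‖C i j‖))
        - ∑ i, max (‖B i i‖) (‖C i i‖)
      ≤ (∑ k, (∑ i, s i k)^2) - ∑ k, ∑ i, x i k * y i k := by
        rw [hGd]
        exact sub_le_sub_right hGsum _
    _ = ∑ k, ((∑ i, s i k)^2 - ∑ i, x i k * y i k) := (Finset.sum_sub_distrib _ _).symm
    _ ≤ ∑ k, ((∑ i, x i k) * (∑ i, y i k)
          - Real.sqrt (∑ i, (x i k)^2) * Real.sqrt (∑ i, (y i k)^2)) :=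
        Finset.sum_le_sum fun k _ => hkey k
    _ = (∑ k, (∑ i, x i k) * (∑ i, y i k))
          - ∑ k, Real.sqrt (∑ i, (x i k)^2) * Real.sqrt (∑ i, (y i k)^2) :=
        Finset.sum_sub_distrib _ _
    _ ≤ entrywiseL1Norm A - traceNorm A := by
        rw [hl1]
        exact sub_le_sub_left htr _
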